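/- Let C be a bivariate copula admitting a tail dependence function Λ. Then Λ is superadditive: Λ(u+u', v+v') ≥ Λ(u,v) + Λ(u',v') for all (u,v), (u',v') ∈ [0,∞)²; and Λ is concave: Λ(t·(u,v) + (1−t)·(u',v')) ≥ t·Λ(u,v) + (1−t)·Λ(u',v') for every t ∈ [0,1] and all (u,v), (u',v') ∈ [0,∞)². -/

import Mathlib

open MeasureTheory Filter Set

/-- A bivariate copula: `C : [0,1]² → [0,1]` with the grounded/marginal conditions and
the 2-increasing property. -/
def IsCopula (C : ℝ → ℝ → ℝ) : Prop :=
  (∀ u ∈ Icc (0:ℝ) 1, ∀ v ∈ Icc (0:ℝ) 1, C u v ∈ Icc (0:ℝ) 1) ∧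
  (∀ u ∈ Icc (0:ℝ) 1, C u 0 = 0 ∧ C 0 u = 0 ∧ C u 1 = u ∧ C 1 u = u) ∧
  (∀ u u' v v' : ℝ, u ∈ Icc (0:ℝ) 1 → u' ∈ Icc (0:ℝ) 1 →
    v ∈ Icc (0:ℝ) 1 → v' ∈ Icc (0:ℝ) 1 → u ≤ u' → v ≤ v' →
    0 ≤ C u' v' - C u' v - C u v' + C u v)

/-- `Λ` is the tail dependence function of `C`:
`Λ(u,v) = lim_{p↓0} C(pu,pv)/p` for every `(u,v) ∈ [0,∞)²`. -/
def HasTDF (C Λ : ℝ → ℝ → ℝ) : Prop :=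
  ∀ u v : ℝ, 0 ≤ u → 0 ≤ v →
    Tendsto (fun p : ℝ => C (p * u) (p * v) / p)
      (nhdsWithin (0:ℝ) (Ioi 0)) (nhds (Λ u v))

section TDFAux

variable {C L : ℝ → ℝ → ℝ}

/-- Eventually near 0 from the right, `p` is positive and `p * a ≤ 1`. -/
private lemma tdf_small (a : ℝ) (ha : 0 ≤ a) :
    ∀ᶠ p in nhdsWithin (0:ℝ) (Ioi 0), 0 < p ∧ p * a ≤ 1 := by
  have hpos : (0:ℝ) < 1 / (1 + a) := by positivity
  have h1 : Ioo (0:ℝ) (1/(1+a)) ∈ nhdsWithin (0:ℝ) (Ioi 0) :=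
    Ioo_mem_nhdsGT_of_mem ⟨le_refl 0, hpos⟩
  filter_upwards [h1] with p hp
  refine ⟨hp.1, ?_⟩
  have h2 : p * (1 + a) < (1/(1+a)) * (1+a) :=
    mul_lt_mul_of_pos_right hp.2 (by positivity)
  rw [one_div_mul_cancel (by positivity : (1:ℝ)+a ≠ 0)] at h2
  nlinarith [hp.1.le]

/-- supermodularity of L -/
private lemma tdf_supermod (hC : IsCopula C) (hL : HasTDF C L) :
    ∀ u u' v v' : ℝ, 0 ≤ u → u ≤ u' → 0 ≤ v → v ≤ v' →
      L u' v + L u v' ≤ L u' v' + L u v := by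
  intro u u' v v' hu huu hv hvv
  have hu' : 0 ≤ u' := hu.trans huu
  have hv' : 0 ≤ v' := hv.trans hvv
  have T : Tendsto (fun p : ℝ =>
      (C (p*u') (p*v') / p + C (p*u) (p*v) / p) - (C (p*u') (p*v) / p + C (p*u) (p*v') / p))
      (nhdsWithin (0:ℝ) (Ioi 0))
      (nhds ((L u' v' + L u v) - (L u' v + L u v'))) :=
    ((hL u' v' hu' hv').add (hL u v hu hv)).sub ((hL u' v hu' hv).add (hL u v' hu hv'))
  have hnn : ∀ᶠ p in nhdsWithin (0:ℝ) (Ioi 0), (0:ℝ) ≤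
      (C (p*u') (p*v') / p + C (p*u) (p*v) / p) - (C (p*u') (p*v) / p + C (p*u) (p*v') / p) := by
    filter_upwards [tdf_small u' hu', tdf_small v' hv'] with p hp1 hp2
    have hp : 0 < p := hp1.1
    have hmu : p * u ∈ Icc (0:ℝ) 1 :=
      ⟨by positivity, (mul_le_mul_of_nonneg_left huu hp.le).trans hp1.2⟩
    have hmu' : p * u' ∈ Icc (0:ℝ) 1 := ⟨by positivity, hp1.2⟩
    have hmv : p * v ∈ Icc (0:ℝ) 1 :=
      ⟨by positivity, (mul_le_mul_of_nonneg_left hvv hp.le).trans hp2.2⟩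
    have hmv' : p * v' ∈ Icc (0:ℝ) 1 := ⟨by positivity, hp2.2⟩
    have h2i := hC.2.2 (p*u) (p*u') (p*v) (p*v') hmu hmu' hmv hmv'
      (mul_le_mul_of_nonneg_left huu hp.le) (mul_le_mul_of_nonneg_left hvv hp.le)
    have heq : (C (p*u') (p*v') / p + C (p*u) (p*v) / p)
        - (C (p*u') (p*v) / p + C (p*u) (p*v') / p)
        = (C (p*u') (p*v') - C (p*u') (p*v) - C (p*u) (p*v') + C (p*u) (p*v)) / p := by
      ring
    rw [heq]
    exact div_nonneg h2i hp.le
  have := ge_of_tendsto T hnn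
  linarith

/-- boundary zeros -/
private lemma tdf_zero_right (hC : IsCopula C) (hL : HasTDF C L) (u : ℝ) (hu : 0 ≤ u) :
    L u 0 = 0 := by
  have h0 : (fun p : ℝ => C (p*u) (p*0) / p) =ᶠ[nhdsWithin (0:ℝ) (Ioi 0)] (fun _ => (0:ℝ)) := by
    filter_upwards [tdf_small u hu] with p hp
    have hmu : p * u ∈ Icc (0:ℝ) 1 := ⟨mul_nonneg hp.1.le hu, hp.2⟩
    simp [mul_zero, (hC.2.1 (p*u) hmu).1]
  exact tendsto_nhds_unique ((hL u 0 hu le_rfl).congr' h0) tendsto_const_nhds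

private lemma tdf_zero_left (hC : IsCopula C) (hL : HasTDF C L) (v : ℝ) (hv : 0 ≤ v) :
    L 0 v = 0 := by
  have h0 : (fun p : ℝ => C (p*0) (p*v) / p) =ᶠ[nhdsWithin (0:ℝ) (Ioi 0)] (fun _ => (0:ℝ)) := by
    filter_upwards [tdf_small v hv] with p hp
    have hmv : p * v ∈ Icc (0:ℝ) 1 := ⟨mul_nonneg hp.1.le hv, hp.2⟩
    simp [mul_zero, (hC.2.1 (p*v) hmv).2.1]
  exact tendsto_nhds_unique ((hL 0 v le_rfl hv).congr' h0) tendsto_const_nhds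

/-- monotone in first argument -/
private lemma tdf_mono1 (hC : IsCopula C) (hL : HasTDF C L) :
    ∀ u u' v : ℝ, 0 ≤ u → u ≤ u' → 0 ≤ v → L u v ≤ L u' v := by
  intro u u' v hu huu hv
  have := tdf_supermod hC hL u u' 0 v hu huu le_rfl hv
  have h1 := tdf_zero_right hC hL u hu
  have h2 := tdf_zero_right hC hL u' (hu.trans huu)
  linarith

/-- monotone in second argument -/
private lemma tdf_mono2 (hC : IsCopula C) (hL : HasTDF C L) :
    ∀ u v v' : ℝ, 0 ≤ u → 0 ≤ v → v ≤ v' → L u v ≤ L u v' := by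
  intro u v v' hu hv hvv
  have := tdf_supermod hC hL 0 u v v' le_rfl hu hv hvv
  have h1 := tdf_zero_left hC hL v hv
  have h2 := tdf_zero_left hC hL v' (hv.trans hvv)
  linarith

/-- homogeneity -/
private lemma tdf_homog (hC : IsCopula C) (hL : HasTDF C L) :
    ∀ c u v : ℝ, 0 ≤ c → 0 ≤ u → 0 ≤ v → L (c*u) (c*v) = c * L u v := by
  intro c u v hc hu hv
  rcases eq_or_lt_of_le hc with hc0 | hcpos
  · simp [← hc0, tdf_zero_left hC hL 0 le_rfl]
  · have hmap : Tendsto (fun p : ℝ => c * p) (nhdsWithin (0:ℝ) (Ioi 0))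
        (nhdsWithin (0:ℝ) (Ioi 0)) := by
      rw [tendsto_nhdsWithin_iff]
      constructor
      · have : Tendsto (fun p : ℝ => c * p) (nhds 0) (nhds (c * 0)) :=
          (continuous_const.mul continuous_id).tendsto 0
        simpa using this.mono_left nhdsWithin_le_nhds
      · filter_upwards [eventually_mem_nhdsWithin] with p hp
        exact mul_pos hcpos hp
    have hcomp := (hL u v hu hv).comp hmap
    have hmul := hcomp.const_mul c
    have heq : (fun p : ℝ => c * (C ((c*p)*u) ((c*p)*v) / (c*p)))
        =ᶠ[nhdsWithin (0:ℝ) (Ioi 0)] (fun p : ℝ => C (p*(c*u)) (p*(c*v)) / p) := by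
      filter_upwards [eventually_mem_nhdsWithin] with p (hp : p ∈ Ioi (0:ℝ))
      have h1 : (c*p)*u = p*(c*u) := by ring
      have h2 : (c*p)*v = p*(c*v) := by ring
      rw [h1, h2, mul_div_assoc', mul_div_mul_left _ _ hcpos.ne']
    exact tendsto_nhds_unique (hL (c*u) (c*v) (by positivity) (by positivity))
      (hmul.congr' heq)

/-- Lipschitz upper bound in the first argument -/
private lemma tdf_lip1 (hC : IsCopula C) (hL : HasTDF C L) :
    ∀ u u' v : ℝ, 0 ≤ u → u ≤ u' → 0 ≤ v → v ≤ 1 → L u' v - L u v ≤ u' - u := by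
  intro u u' v hu huu hv hv1
  have hu' : 0 ≤ u' := hu.trans huu
  have T : Tendsto (fun p : ℝ => C (p*u') (p*v) / p - C (p*u) (p*v) / p)
      (nhdsWithin (0:ℝ) (Ioi 0)) (nhds (L u' v - L u v)) :=
    (hL u' v hu' hv).sub (hL u v hu hv)
  have hev : ∀ᶠ p in nhdsWithin (0:ℝ) (Ioi 0),
      C (p*u') (p*v) / p - C (p*u) (p*v) / p ≤ u' - u := by
    filter_upwards [tdf_small u' hu', tdf_small 1 zero_le_one] with p hp1 hp2
    have hp : 0 < p := hp1.1
    have hmu : p * u ∈ Icc (0:ℝ) 1 :=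
      ⟨by positivity, (mul_le_mul_of_nonneg_left huu hp.le).trans hp1.2⟩
    have hmu' : p * u' ∈ Icc (0:ℝ) 1 := ⟨by positivity, hp1.2⟩
    have hmv : p * v ∈ Icc (0:ℝ) 1 := ⟨by positivity, by
      calc p * v ≤ p * 1 := mul_le_mul_of_nonneg_left hv1 hp.le
        _ ≤ 1 := hp2.2⟩
    have hone : (1:ℝ) ∈ Icc (0:ℝ) 1 := ⟨zero_le_one, le_refl 1⟩
    have h2i := hC.2.2 (p*u) (p*u') (p*v) 1 hmu hmu' hmv hone
      (mul_le_mul_of_nonneg_left huu hp.le) hmv.2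
    have hm1 : C (p*u') 1 = p*u' := (hC.2.1 (p*u') hmu').2.2.1
    have hm2 : C (p*u) 1 = p*u := (hC.2.1 (p*u) hmu).2.2.1
    rw [hm1, hm2] at h2i
    rw [div_sub_div_same, div_le_iff₀ hp]
    nlinarith
  exact le_of_tendsto T hev

/-- the key geometric-mean inequality -/
private lemma tdf_star (hC : IsCopula C) (hL : HasTDF C L) :
    ∀ α β : ℝ, 0 < α → α ≤ β →
      β * L (α^2) 1 + α * L (β^2) 1 ≤ (α+β) * L (α*β) 1 := by
  intro α β hα hαβ
  have hβ : 0 < β := hα.trans_le hαβ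
  have hsm := tdf_supermod hC hL (α^2*β) (α*β^2) α β (by positivity)
    (by nlinarith [mul_pos hα hβ]) hα.le hαβ
  have e1 : L (α*β^2) α = α * L (β^2) 1 := by
    have h := tdf_homog hC hL α (β^2) 1 hα.le (by positivity) zero_le_one
    rw [mul_one] at h; exact h
  have e2 : L (α^2*β) β = β * L (α^2) 1 := by
    have h := tdf_homog hC hL β (α^2) 1 hβ.le (by positivity) zero_le_one
    rw [mul_one] at h
    rw [show α^2*β = β*α^2 by ring]; exact h
  have e3 : L (α*β^2) β = β * L (α*β) 1 := by
    have h := tdf_homog hC hL β (α*β) 1 hβ.le (by positivity) zero_le_one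
    rw [mul_one] at h
    rw [show α*β^2 = β*(α*β) by ring]; exact h
  have e4 : L (α^2*β) α = α * L (α*β) 1 := by
    have h := tdf_homog hC hL α (α*β) 1 hα.le (by positivity) zero_le_one
    rw [mul_one] at h
    rw [show α^2*β = α*(α*β) by ring]; exact h
  rw [e1, e2, e3, e4] at hsm
  linarith

set_option maxHeartbeats 1000000 in
/-- concavity of `h x = L x 1` on `[0, ∞)` -/
private lemma tdf_hconc (hC : IsCopula C) (hL : HasTDF C L) :
    ∀ x y t : ℝ, 0 ≤ x → x ≤ y → 0 ≤ t → t ≤ 1 →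
      t * L x 1 + (1-t) * L y 1 ≤ L (t*x + (1-t)*y) 1 := by
  intro x y t hx hxy ht ht1
  rcases eq_or_lt_of_le hxy with rfl | hlt
  · have h1 : t*x + (1-t)*x = x := by ring
    rw [h1]
    have h2 : t * L x 1 + (1-t) * L x 1 = L x 1 := by ring
    linarith
  have hylt : 0 < y - x := by linarith
  set slope := (L y 1 - L x 1) / (y - x) with hslope
  set g : ℝ → ℝ := fun s => L s 1 - (L x 1 + slope * (s - x)) with hg
  have hlipc : ∀ s1 s2 : ℝ, 0 ≤ s1 → s1 ≤ s2 →
      L s2 1 - L s1 1 ≤ s2 - s1 ∧ 0 ≤ L s2 1 - L s1 1 := fun s1 s2 h1 h12 =>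
    ⟨tdf_lip1 hC hL s1 s2 1 h1 h12 zero_le_one le_rfl,
     sub_nonneg.mpr (tdf_mono1 hC hL s1 s2 1 h1 h12 zero_le_one)⟩
  have hlip : LipschitzOnWith 1 (fun s => L s 1) (Icc x y) := by
    rw [lipschitzOnWith_iff_dist_le_mul]
    intro a ha b hb
    rw [Real.dist_eq, Real.dist_eq, NNReal.coe_one, one_mul, abs_sub_le_iff]
    rcases le_total a b with hab | hab
    · obtain ⟨h1, h2⟩ := hlipc a b (hx.trans ha.1) hab
      have habs : |a - b| = b - a := by rw [abs_sub_comm]; exact abs_of_nonneg (by linarith)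
      constructor <;> linarith
    · obtain ⟨h1, h2⟩ := hlipc b a (hx.trans hb.1) hab
      have habs : |a - b| = a - b := abs_of_nonneg (by linarith)
      constructor <;> linarith
  have hcont : ContinuousOn (fun s => L s 1) (Icc x y) := hlip.continuousOn
  have hgcont : ContinuousOn g (Icc x y) := by
    apply hcont.sub
    exact (continuous_const.add (continuous_const.mul
      (continuous_id.sub continuous_const))).continuousOn
  have hgx : g x = 0 := by simp [hg]
  have hgy : g y = 0 := by
    simp only [hg, hslope]
    rw [div_mul_cancel₀ _ (ne_of_gt hylt)]
    ring
  obtain ⟨c, hcmem, hcmin⟩ := isCompact_Icc.exists_isMinOn (nonempty_Icc.mpr hxy) hgcont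
  rw [isMinOn_iff] at hcmin
  set m := g c with hm
  have hmain : 0 ≤ m := by
    by_contra hneg
    push_neg at hneg
    set K := Icc x y ∩ g ⁻¹' {m} with hK
    have hKcl : IsClosed K := hgcont.preimage_isClosed_of_isClosed isClosed_Icc isClosed_singleton
    have hKne : K.Nonempty := ⟨c, hcmem, rfl⟩
    have hKbdd : BddBelow K := ⟨x, fun s hs => hs.1.1⟩
    set c₀ := sInf K with hc₀
    have hc₀K : c₀ ∈ K := hKcl.csInf_mem hKne hKbdd
    have hc₀m : g c₀ = m := hc₀K.2
    have hc₀mem : c₀ ∈ Icc x y := hc₀K.1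
    have hxc₀ : x < c₀ := by
      rcases eq_or_lt_of_le hc₀mem.1 with h | h
      · exfalso; rw [← h, hgx] at hc₀m; linarith
      · exact h
    have hc₀y : c₀ < y := by
      rcases eq_or_lt_of_le hc₀mem.2 with h | h
      · exfalso; rw [h, hgy] at hc₀m; linarith
      · exact h
    have hc₀pos : 0 < c₀ := lt_of_le_of_lt hx hxc₀
    set y' := min y (2*c₀ - x) with hy'
    have hy'1 : c₀ < y' := lt_min hc₀y (by linarith)
    have hy'2 : y' ≤ y := min_le_left _ _
    have hy'pos : 0 < y' := hc₀pos.trans hy'1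
    have hy'3 : x * y' ≤ c₀^2 := by
      have h1 : y' ≤ 2*c₀ - x := min_le_right _ _
      nlinarith [sq_nonneg (c₀ - x)]
    set x' := c₀^2 / y' with hx'
    have hx'1 : x ≤ x' := (le_div_iff₀ hy'pos).mpr hy'3
    have hx'2 : x' < c₀ := (div_lt_iff₀ hy'pos).mpr (by nlinarith)
    have hx'pos : 0 < x' := div_pos (by positivity) hy'pos
    have hx'y' : x' * y' = c₀^2 := div_mul_cancel₀ _ (ne_of_gt hy'pos)
    set α := Real.sqrt x' with hα
    set β := Real.sqrt y' with hβ
    have hαpos : 0 < α := Real.sqrt_pos.mpr hx'pos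
    have hβpos : 0 < β := Real.sqrt_pos.mpr hy'pos
    have hαβ : α ≤ β := Real.sqrt_le_sqrt (by linarith : x' ≤ y')
    have hα2 : α^2 = x' := Real.sq_sqrt hx'pos.le
    have hβ2 : β^2 = y' := Real.sq_sqrt hy'pos.le
    have hαβ2 : α * β = c₀ := by
      rw [hα, hβ, ← Real.sqrt_mul hx'pos.le, hx'y', Real.sqrt_sq hc₀pos.le]
    have hstar := tdf_star hC hL α β hαpos hαβ
    rw [hα2, hβ2, hαβ2] at hstar
    have hkey : β * x' + α * y' = (α+β) * c₀ := by
      rw [← hα2, ← hβ2, ← hαβ2]; ring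
    have heq2 : β * (L x 1 + slope * (x' - x)) + α * (L x 1 + slope * (y' - x))
        = (α+β) * (L x 1 + slope * (c₀ - x)) := by linear_combination slope * hkey
    have hgineq : β * g x' + α * g y' ≤ (α+β) * g c₀ := by
      simp only [hg]
      linarith [hstar, heq2]
    have hx'mem : x' ∈ Icc x y := ⟨hx'1, by linarith⟩
    have hy'mem : y' ∈ Icc x y := ⟨by linarith, hy'2⟩
    have hgx' : m < g x' := by
      rcases eq_or_lt_of_le (hcmin x' hx'mem) with h | h
      · exfalso
        have hmem : x' ∈ K := ⟨hx'mem, h.symm⟩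
        have hle := csInf_le hKbdd hmem
        rw [← hc₀] at hle
        linarith
      · exact h
    have hgy' : m ≤ g y' := hcmin y' hy'mem
    have h1 : β * m < β * g x' := mul_lt_mul_of_pos_left hgx' hβpos
    have h2 : α * m ≤ α * g y' := mul_le_mul_of_nonneg_left hgy' hαpos.le
    rw [hc₀m] at hgineq
    have hrm : (α+β)*m = β*m + α*m := by ring
    linarith
  have hz0 : t*x + (1-t)*y ∈ Icc x y := by
    have ha1 : 0 ≤ (1-t)*(y-x) := mul_nonneg (by linarith) (by linarith)
    have ha2 : 0 ≤ t*(y-x) := mul_nonneg ht (by linarith)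
    constructor <;> nlinarith
  have hfin := hcmin _ hz0
  have hs : slope * (y - x) = L y 1 - L x 1 := div_mul_cancel₀ _ (ne_of_gt hylt)
  have hs2 : slope * (t*x + (1-t)*y - x) = (1-t) * (L y 1 - L x 1) := by
    have h1 : t*x + (1-t)*y - x = (1-t)*(y-x) := by ring
    rw [h1, show slope * ((1-t)*(y-x)) = (1-t)*(slope*(y-x)) from by ring, hs]
  simp only [hg] at hfin
  rw [hs2] at hfin
  nlinarith [hfin, hmain]


/-- superadditivity -/
private lemma tdf_superadd (hC : IsCopula C) (hL : HasTDF C L) :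
    ∀ u v u' v' : ℝ, 0 ≤ u → 0 ≤ v → 0 ≤ u' → 0 ≤ v' →
      L u v + L u' v' ≤ L (u+u') (v+v') := by
  intro u v u' v' hu hv hu' hv'
  by_cases hv0 : v = 0
  · subst hv0
    rw [tdf_zero_right hC hL u hu, zero_add, zero_add]
    exact tdf_mono1 hC hL u' (u+u') v' hu' (by linarith) hv'
  by_cases hv'0 : v' = 0
  · subst hv'0
    rw [tdf_zero_right hC hL u' hu', add_zero, add_zero]
    exact tdf_mono1 hC hL u (u+u') v hu (by linarith) hv
  have hvpos : 0 < v := lt_of_le_of_ne hv (Ne.symm hv0)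
  have hv'pos : 0 < v' := lt_of_le_of_ne hv' (Ne.symm hv'0)
  set x := u / v with hxd
  set y := u' / v' with hyd
  have hx : 0 ≤ x := div_nonneg hu hv
  have hy : 0 ≤ y := div_nonneg hu' hv'
  set t := v / (v+v') with htd
  have hvv' : 0 < v + v' := by linarith
  have ht : 0 ≤ t := div_nonneg hv hvv'.le
  have ht1 : t ≤ 1 := by
    rw [htd, div_le_one hvv']; linarith
  have hsum : t*x + (1-t)*y = (u+u')/(v+v') := by
    rw [htd, hxd, hyd]
    field_simp
    ring
  have e1 : L u v = v * L x 1 := by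
    have hvx : v * x = u := by rw [hxd]; field_simp
    have h := tdf_homog hC hL v x 1 hvpos.le hx zero_le_one
    rw [mul_one, hvx] at h; exact h
  have e2 : L u' v' = v' * L y 1 := by
    have hvy : v' * y = u' := by rw [hyd]; field_simp
    have h := tdf_homog hC hL v' y 1 hv'pos.le hy zero_le_one
    rw [mul_one, hvy] at h; exact h
  have e3 : L (u+u') (v+v') = (v+v') * L ((u+u')/(v+v')) 1 := by
    have hvz : (v+v') * ((u+u')/(v+v')) = u+u' := by field_simp
    have h := tdf_homog hC hL (v+v') ((u+u')/(v+v')) 1 hvv'.le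
      (div_nonneg (by linarith) hvv'.le) zero_le_one
    rw [mul_one, hvz] at h; exact h
  have key : t * L x 1 + (1-t) * L y 1 ≤ L (t*x + (1-t)*y) 1 := by
    rcases le_total x y with hxy | hxy
    · exact tdf_hconc hC hL x y t hx hxy ht ht1
    · have h := tdf_hconc hC hL y x (1-t) hy hxy (by linarith) (by linarith)
      have h1 : (1-t)*y + (1-(1-t))*x = t*x + (1-t)*y := by ring
      rw [h1] at h
      linarith
  have hmul : (v+v') * (t * L x 1 + (1-t) * L y 1) ≤ (v+v') * L (t*x + (1-t)*y) 1 :=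
    mul_le_mul_of_nonneg_left key hvv'.le
  have h2 : (v+v')*t = v := by rw [htd]; field_simp
  have h3 : (v+v')*(1-t) = v' := by rw [htd]; field_simp; ring
  have h4 : (v+v') * (t * L x 1 + (1-t) * L y 1) = v * L x 1 + v' * L y 1 := by
    linear_combination (L x 1) * h2 + (L y 1) * h3
  rw [e1, e2, e3, ← hsum]
  linarith

end TDFAux

theorem tdf_superadditive_concave (C Λ : ℝ → ℝ → ℝ)
    (hC : IsCopula C) (hΛ : HasTDF C Λ) :
    (∀ u v u' v' : ℝ, 0 ≤ u → 0 ≤ v → 0 ≤ u' → 0 ≤ v' →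
      Λ u v + Λ u' v' ≤ Λ (u + u') (v + v')) ∧
    (∀ t u v u' v' : ℝ, t ∈ Icc (0:ℝ) 1 → 0 ≤ u → 0 ≤ v → 0 ≤ u' → 0 ≤ v' →
      t * Λ u v + (1 - t) * Λ u' v' ≤ Λ (t * u + (1 - t) * u') (t * v + (1 - t) * v')) := by
  constructor
  · exact fun u v u' v' hu hv hu' hv' => tdf_superadd hC hΛ u v u' v' hu hv hu' hv'
  · intro t u v u' v' htm hu hv hu' hv'
    have h1 : Λ (t*u) (t*v) = t * Λ u v := tdf_homog hC hΛ t u v htm.1 hu hv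
    have h2 : Λ ((1-t)*u') ((1-t)*v') = (1-t) * Λ u' v' :=
      tdf_homog hC hΛ (1-t) u' v' (by linarith [htm.2]) hu' hv'
    have h := tdf_superadd hC hΛ (t*u) (t*v) ((1-t)*u') ((1-t)*v')
      (mul_nonneg htm.1 hu) (mul_nonneg htm.1 hv)
      (mul_nonneg (by linarith [htm.2]) hu') (mul_nonneg (by linarith [htm.2]) hv')
    rw [h1, h2] at h
    exact h
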